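/- Let κ be an ordinal and let G = ⨁_{α<κ} ℝ/ℤ be the direct sum of κ copies of the circle group ℝ/ℤ (finitely supported functions from κ to ℝ/ℤ). Let B be the set of elements of G of order exactly 2, i.e. B = {x ∈ G : x ≠ 0 and x + x = 0}. Then B is strongly IP-regular. -/

import Mathlib

open Finset in
/-- Sum of two finset-sums of 2-torsion elements is the sum over the symmetric difference. -/
lemma sum_add_sum_of_two_torsion {M : Type*} [AddCommMonoid M] (f : ℕ → M)
    (hf : ∀ i, f i + f i = 0) (a b : Finset ℕ) :
    ∑ i ∈ a, f i + ∑ i ∈ b, f i = ∑ i ∈ (a \ b) ∪ (b \ a), f i := by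
  classical
  have ha := Finset.sum_inter_add_sum_sdiff a b f
  have hb := Finset.sum_inter_add_sum_sdiff b a f
  have hdisj : Disjoint (a \ b) (b \ a) := disjoint_sdiff_sdiff
  rw [Finset.sum_union hdisj, ← ha, ← hb, Finset.inter_comm b a]
  have : ∑ i ∈ a ∩ b, f i + ∑ i ∈ a ∩ b, f i = 0 := by
    rw [← Finset.sum_add_distrib]
    exact Finset.sum_eq_zero fun i _ => hf i
  abel_nf
  abel_nf at this
  rw [this, zero_add]

lemma FS_exists_finset {M : Type*} [AddCommMonoid M] {a : Stream' M} {m : M}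
    (h : m ∈ Hindman.FS a) : ∃ s : Finset ℕ, s.Nonempty ∧ m = ∑ i ∈ s, a.get i := by
  induction h with
  | head' a => exact ⟨{0}, ⟨0, by simp⟩, by simp⟩
  | tail' a m h ih =>
    obtain ⟨s, hs, rfl⟩ := ih
    refine ⟨s.map ⟨Nat.succ, Nat.succ_injective⟩, hs.map, ?_⟩
    rw [Finset.sum_map]
    rfl
  | cons' a m h ih =>
    obtain ⟨s, hs, rfl⟩ := ih
    have h0 : (0 : ℕ) ∉ s.map ⟨Nat.succ, Nat.succ_injective⟩ := by simp
    refine ⟨insert 0 (s.map ⟨Nat.succ, Nat.succ_injective⟩), Finset.insert_nonempty _ _, ?_⟩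
    rw [Finset.sum_insert h0, Finset.sum_map]
    rfl




/-- A subset `A` of an additive semigroup `S` is *strongly IP-regular* if for every sequence `x`
in `S` with `FS x ⊆ A` (where `Hindman.FS x` is the set of sums `∑_{i ∈ a} x i` over finite
nonempty `a ⊆ ℕ`) there is no sequence `y` in `S` with `FS y ⊆ x₀ + FS₁ x`. -/
def StronglyIPRegularAdd {S : Type*} [AddSemigroup S] (A : Set S) : Prop :=
  ∀ x : Stream' S, Hindman.FS x ⊆ A →
    ∀ y : Stream' S, ¬ Hindman.FS y ⊆ (x.head + ·) '' Hindman.FS x.tail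

/-- In the direct sum `G = ⨁_{α < κ} ℝ/ℤ` (finitely supported functions from a well-ordered
index type into `ℝ/ℤ = AddCircle 1`), the set of elements of order exactly `2` is strongly
IP-regular. -/
theorem order_two_stronglyIPRegular {ι : Type*} [LinearOrder ι] [WellFoundedLT ι] :
    StronglyIPRegularAdd
      {x : ι →₀ AddCircle (1 : ℝ) | x ≠ 0 ∧ x + x = 0} := by
  classical
  intro x hx y hy
  -- every element of FS x is nonzero 2-torsion
  have hB : ∀ m ∈ Hindman.FS x, m ≠ 0 ∧ m + m = 0 := fun m hm => hx hm
  have htor : ∀ i, x.tail.get i + x.tail.get i = 0 := fun i =>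
    (hB _ (Hindman.FS.tail _ _ (Hindman.FS.singleton x.tail i))).2
  -- extract s, t, u
  obtain ⟨s, hs, hse⟩ := hy (Hindman.FS.head y)
  obtain ⟨t, ht, hte⟩ := hy (Hindman.FS.tail _ _ (Hindman.FS.head y.tail))
  obtain ⟨u, hu, hue⟩ := hy (Hindman.FS.cons _ _ (Hindman.FS.head y.tail))
  beta_reduce at hse hte hue
  have hx0 : x.head + x.head = 0 := (hB _ (Hindman.FS.head x)).2
  have hu2 : u + u = 0 := (hB _ (Hindman.FS.tail _ _ hu)).2
  -- x.head = s + t + u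
  have key : x.head = s + t + u := by
    have h1 : x.head + u = s + t := by
      rw [← hse, ← hte] at hue
      calc x.head + u = (x.head + s) + (x.head + t) := hue
        _ = (x.head + x.head) + (s + t) := by abel
        _ = s + t := by rw [hx0, zero_add]
    calc x.head = x.head + (u + u) := by rw [hu2, add_zero]
      _ = (x.head + u) + u := by abel
      _ = s + t + u := by rw [h1]
  -- express s, t, u as finset sums of x.tail
  obtain ⟨a, ha, rfl⟩ := FS_exists_finset hs
  obtain ⟨b, hb, rfl⟩ := FS_exists_finset ht
  obtain ⟨c, hc, rfl⟩ := FS_exists_finset hu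
  set f : ℕ → (ι →₀ AddCircle (1 : ℝ)) := x.tail.get with hf
  have key2 : x.head = ∑ i ∈ ((a \ b ∪ b \ a) \ c ∪ c \ (a \ b ∪ b \ a)), f i := by
    rw [key, sum_add_sum_of_two_torsion f htor a b, sum_add_sum_of_two_torsion f htor]
  set d : Finset ℕ := (a \ b ∪ b \ a) \ c ∪ c \ (a \ b ∪ b \ a) with hd
  rcases d.eq_empty_or_nonempty with hde | hdn
  · rw [hde, Finset.sum_empty] at key2
    exact (hB _ (Hindman.FS.head x)).1 key2
  · have hmem : ∑ i ∈ d, f i ∈ Hindman.FS x.tail := Hindman.FS.finset_sum x.tail d hdn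
    have : x.head + ∑ i ∈ d, f i ∈ Hindman.FS x := Hindman.FS.cons _ _ hmem
    rw [key2] at this
    have h0 : (0 : ι →₀ AddCircle (1 : ℝ)) ∈ Hindman.FS x := by
      have h2 : ∑ i ∈ d, f i + ∑ i ∈ d, f i = 0 :=
        (hB _ (Hindman.FS.tail _ _ hmem)).2
      rwa [h2] at this
    exact (hB _ h0).1 rfl
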